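/- Let S_n be the star graph on n ≥ 1 vertices and let 0 < p < ∞. Then max{n^{1/p}/2, 1} ≤ ‖M_{S_n}‖_{p,∞} ≤ n^{1/p}. In particular, for every finite simple connected graph G with n vertices, ‖M_G‖_{p,∞} ≤ 2·‖M_{S_n}‖_{p,∞}. -/

import Mathlib

open scoped Classical
open Finset

noncomputable section

variable {V : Type*} [Fintype V]

/-- metric ball of radius `r` centered at `v` in the graph `G` -/
def gBall (G : SimpleGraph V) (v : V) (r : ℕ) : Finset V :=
  Finset.univ.filter fun w => G.dist v w ≤ r

/-- Hardy–Littlewood maximal operator on the graph `G` -/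
def maxOp (G : SimpleGraph V) (f : V → ℝ) (v : V) : ℝ :=
  ⨆ k : Fin (Fintype.card V), (∑ w ∈ gBall G v k.1, |f w|) / ((gBall G v k.1).card : ℝ)

/-- ℓ^p (quasi)norm of a function on the vertices -/
def pNorm (p : ℝ) (f : V → ℝ) : ℝ := (∑ v, |f v| ^ p) ^ (1 / p)

/-- operator (quasi)norm of the maximal operator of `G` on ℓ^p -/
def opNorm (G : SimpleGraph V) (p : ℝ) : ℝ :=
  ⨆ f : {f : V → ℝ // f ≠ 0}, pNorm p (maxOp G f.1) / pNorm p f.1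

/-- weak ℓ^p norm -/
def wNorm (p : ℝ) (f : V → ℝ) : ℝ :=
  ⨆ t : {t : ℝ // 0 < t},
    t.1 * ((Finset.univ.filter fun v => t.1 < |f v|).card : ℝ) ^ (1 / p)

/-- weak-type operator norm of the maximal operator of `G` -/
def wOpNorm (G : SimpleGraph V) (p : ℝ) : ℝ :=
  ⨆ f : {f : V → ℝ // f ≠ 0}, wNorm p (maxOp G f.1) / pNorm p f.1

/-- maximal operator over all graphs on `V` isomorphic to `G` -/
def maxOpIso (G : SimpleGraph V) (f : V → ℝ) (j : V) : ℝ :=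
  ⨆ H : {H : SimpleGraph V // Nonempty (H ≃g G)}, maxOp H.1 f j

/-- operator norm of `maxOpIso` on ℓ^p -/
def opNormIso (G : SimpleGraph V) (p : ℝ) : ℝ :=
  ⨆ f : {f : V → ℝ // f ≠ 0}, pNorm p (maxOpIso G f.1) / pNorm p f.1

/-- Kronecker delta at `k` -/
def kdelta (k : V) : V → ℝ := fun j => if j = k then 1 else 0

/-- star graph on `Fin n` with center `0` -/
def starGraph (n : ℕ) : SimpleGraph (Fin n) :=
  SimpleGraph.fromRel fun i _ => i.1 = 0

/-- diameter of a graph -/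
def gDiam (G : SimpleGraph V) : ℕ :=
  Finset.univ.sup fun p : V × V => G.dist p.1 p.2

/-- dilation index of a graph -/
def dilIndex (G : SimpleGraph V) : ℝ :=
  ⨆ x : V, ⨆ r : {r : ℕ // r ≤ gDiam G},
    ((gBall G x (3 * r.1)).card : ℝ) / ((gBall G x r.1).card : ℝ)

/-- overlapping index of a graph -/
def overlapIndex (G : SimpleGraph V) : ℕ :=
  sInf { r : ℕ | ∀ J : Finset (V × ℕ), ∃ I ⊆ J,
    J.biUnion (fun j => gBall G j.1 j.2) = I.biUnion (fun i => gBall G i.1 i.2) ∧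
    ∀ v : V, (I.filter fun i => v ∈ gBall G i.1 i.2).card ≤ r }

-- helpers

lemma gBall_self_mem (G : SimpleGraph V) (v : V) (r : ℕ) : v ∈ gBall G v r := by
  simp [gBall, SimpleGraph.dist_self]

lemma gBall_card_pos (G : SimpleGraph V) (v : V) (r : ℕ) : 0 < (gBall G v r).card :=
  Finset.card_pos.2 ⟨v, gBall_self_mem G v r⟩

lemma pNorm_nonneg (p : ℝ) (f : V → ℝ) : 0 ≤ pNorm p f :=
  Real.rpow_nonneg (Finset.sum_nonneg fun v _ => Real.rpow_nonneg (abs_nonneg _) _) _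

lemma abs_le_pNorm (p : ℝ) (hp : 0 < p) (f : V → ℝ) (w : V) : |f w| ≤ pNorm p f := by
  have h1 : |f w| = (|f w| ^ p) ^ (1/p) := by
    rw [one_div, Real.rpow_rpow_inv (abs_nonneg _) hp.ne']
  rw [h1, pNorm]
  exact Real.rpow_le_rpow (Real.rpow_nonneg (abs_nonneg _) _)
    (Finset.single_le_sum (fun v _ => Real.rpow_nonneg (abs_nonneg _) _) (Finset.mem_univ w))
    (by positivity)

lemma pNorm_pos (p : ℝ) (hp : 0 < p) {f : V → ℝ} (hf : f ≠ 0) : 0 < pNorm p f := by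
  obtain ⟨w, hw⟩ : ∃ w, f w ≠ 0 := by
    by_contra h; push_neg at h; exact hf (funext h)
  calc (0:ℝ) < |f w| := abs_pos.2 hw
    _ ≤ pNorm p f := abs_le_pNorm p hp f w

lemma maxOp_le_pNorm (G : SimpleGraph V) (p : ℝ) (hp : 0 < p) (f : V → ℝ) (v : V) :
    maxOp G f v ≤ pNorm p f := by
  haveI : Nonempty V := ⟨v⟩
  haveI : Nonempty (Fin (Fintype.card V)) := ⟨⟨0, Fintype.card_pos⟩⟩
  apply ciSup_le
  intro k
  have hc : (0:ℝ) < ((gBall G v k.1).card : ℝ) := by exact_mod_cast gBall_card_pos G v k.1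
  rw [div_le_iff₀ hc]
  calc ∑ w ∈ gBall G v k.1, |f w| ≤ ∑ _w ∈ gBall G v k.1, pNorm p f :=
        Finset.sum_le_sum fun w _ => abs_le_pNorm p hp f w
    _ = pNorm p f * ((gBall G v k.1).card : ℝ) := by
        rw [Finset.sum_const, nsmul_eq_mul, mul_comm]

lemma wNorm_term_le (G : SimpleGraph V) (p : ℝ) (hp : 0 < p) (f : V → ℝ)
    (t : {t : ℝ // 0 < t}) :
    t.1 * ((Finset.univ.filter fun v => t.1 < |maxOp G f v|).card : ℝ) ^ (1/p)
      ≤ (Fintype.card V : ℝ) ^ (1/p) * pNorm p f := by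
  obtain ⟨t, ht⟩ := t
  dsimp only
  set s := Finset.univ.filter fun v => t < |maxOp G f v| with hs
  rcases Nat.eq_zero_or_pos s.card with h0 | h1
  · rw [h0]
    simp only [Nat.cast_zero]
    rw [Real.zero_rpow (by positivity), mul_zero]
    exact mul_nonneg (by positivity) (pNorm_nonneg p f)
  · obtain ⟨v, hv⟩ := Finset.card_pos.1 h1
    simp only [hs, Finset.mem_filter] at hv
    haveI : Nonempty V := ⟨v⟩
    have htle : t ≤ pNorm p f := by
      refine le_trans hv.2.le ?_
      rw [abs_le]
      constructor
      · calc -(pNorm p f) ≤ 0 := neg_nonpos.2 (pNorm_nonneg p f)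
          _ ≤ maxOp G f v := by
            haveI : Nonempty (Fin (Fintype.card V)) := ⟨⟨0, Fintype.card_pos (α := V)⟩⟩
            refine le_ciSup_of_le (Set.Finite.bddAbove (Set.finite_range _)) ⟨0, Fintype.card_pos⟩ ?_
            positivity
      · exact maxOp_le_pNorm G p hp f v
    have hcard : ((s.card : ℝ)) ^ (1/p) ≤ ((Fintype.card V : ℝ)) ^ (1/p) := by
      apply Real.rpow_le_rpow (by positivity) _ (by positivity)
      exact_mod_cast Finset.card_le_card (Finset.filter_subset _ _) |>.trans
        (le_of_eq (Finset.card_univ))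
    calc t * ((s.card : ℝ)) ^ (1/p) ≤ pNorm p f * ((Fintype.card V : ℝ)) ^ (1/p) :=
          mul_le_mul htle hcard (by positivity) (pNorm_nonneg p f)
      _ = (Fintype.card V : ℝ) ^ (1/p) * pNorm p f := mul_comm _ _

lemma wNorm_maxOp_bdd (G : SimpleGraph V) (p : ℝ) (hp : 0 < p) (f : V → ℝ) :
    BddAbove (Set.range fun t : {t : ℝ // 0 < t} =>
      t.1 * ((Finset.univ.filter fun v => t.1 < |maxOp G f v|).card : ℝ) ^ (1/p)) :=
  ⟨(Fintype.card V : ℝ) ^ (1/p) * pNorm p f, by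
    rintro x ⟨t, rfl⟩; exact wNorm_term_le G p hp f t⟩

lemma wNorm_maxOp_le (G : SimpleGraph V) (p : ℝ) (hp : 0 < p) (f : V → ℝ) :
    wNorm p (maxOp G f) ≤ (Fintype.card V : ℝ) ^ (1/p) * pNorm p f :=
  Real.iSup_le (wNorm_term_le G p hp f) (mul_nonneg (by positivity) (pNorm_nonneg p f))

lemma wOpNorm_le (G : SimpleGraph V) (p : ℝ) (hp : 0 < p) :
    wOpNorm G p ≤ (Fintype.card V : ℝ) ^ (1/p) := by
  apply Real.iSup_le
  · rintro ⟨f, hf⟩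
    rw [div_le_iff₀ (pNorm_pos p hp hf)]
    exact wNorm_maxOp_le G p hp f
  · positivity

-- lower bound helper for sups over positive t
lemma ciSup_pos_ge (g : {t : ℝ // 0 < t} → ℝ) (hb : BddAbove (Set.range g)) (c A : ℝ)
    (hc : 0 < c) (hA : 0 < A) (h : ∀ t : {t : ℝ // 0 < t}, t.1 < c → t.1 * A ≤ g t) :
    c * A ≤ ⨆ t, g t := by
  by_contra hcon
  push_neg at hcon
  have hhalf : (c/2) * A ≤ ⨆ t, g t :=
    le_trans (h ⟨c/2, by linarith⟩ (by linarith)) (le_ciSup hb _)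
  have hsuppos : 0 < ⨆ t, g t := lt_of_lt_of_le (by positivity) hhalf
  have hlt : (⨆ t, g t) / A < c := (div_lt_iff₀ hA).2 (by linarith [mul_comm c A])
  obtain ⟨t, ht1, ht2⟩ := exists_between hlt
  have htpos : 0 < t := lt_trans (by positivity) ht1
  have := le_trans (h ⟨t, htpos⟩ ht2) (le_ciSup hb ⟨t, htpos⟩)
  have : t ≤ (⨆ t, g t) / A := (le_div_iff₀ hA).2 this
  linarith


lemma term_le_maxOp (G : SimpleGraph V) (f : V → ℝ) (v : V) (k : ℕ) (hk : k < Fintype.card V) :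
    (∑ w ∈ gBall G v k, |f w|) / ((gBall G v k).card : ℝ) ≤ maxOp G f v :=
  le_ciSup (f := fun k : Fin (Fintype.card V) =>
      (∑ w ∈ gBall G v k.1, |f w|) / ((gBall G v k.1).card : ℝ))
    (Set.Finite.bddAbove (Set.finite_range _)) (⟨k, hk⟩ : Fin (Fintype.card V))

section star
variable {n : ℕ}

lemma star_adj (hn : 1 ≤ n) [NeZero n] {v w : Fin n} :
    (starGraph n).Adj v w ↔ v ≠ w ∧ (v = 0 ∨ w = 0) := by
  simp only [starGraph, SimpleGraph.fromRel_adj, Fin.ext_iff, Fin.val_zero]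

lemma star_conn (hn : 1 ≤ n) [NeZero n] : (starGraph n).Connected := by
  rw [SimpleGraph.connected_iff]
  refine ⟨?_, ⟨0⟩⟩
  have h : ∀ w : Fin n, (starGraph n).Reachable w 0 := by
    intro w
    rcases eq_or_ne w 0 with rfl | hw
    · exact SimpleGraph.Reachable.refl _
    · exact SimpleGraph.Adj.reachable ((star_adj hn).2 ⟨hw, Or.inr rfl⟩)
  exact fun u v => (h u).trans (h v).symm

lemma star_ball_center (hn : 1 ≤ n) [NeZero n] :
    gBall (starGraph n) (0 : Fin n) 0 = {0} := by
  ext w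
  simp only [gBall, Finset.mem_filter, Finset.mem_univ, true_and, Finset.mem_singleton,
    Nat.le_zero, (star_conn hn).dist_eq_zero_iff]
  exact eq_comm

lemma star_ball_leaf (hn : 1 ≤ n) [NeZero n] {v : Fin n} (hv : v ≠ 0) :
    gBall (starGraph n) v 1 = {v, 0} := by
  ext w
  simp only [gBall, Finset.mem_filter, Finset.mem_univ, true_and, Finset.mem_insert,
    Finset.mem_singleton]
  constructor
  · intro h
    rcases Nat.le_one_iff_eq_zero_or_eq_one.1 h with h0 | h1
    · exact Or.inl ((star_conn hn).dist_eq_zero_iff.1 h0).symm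
    · have hadj := SimpleGraph.dist_eq_one_iff_adj.1 h1
      rcases ((star_adj hn).1 hadj).2 with h | h
      · exact absurd h hv
      · exact Or.inr h
  · rintro (rfl | rfl)
    · simp [SimpleGraph.dist_self]
    · exact le_of_eq (SimpleGraph.dist_eq_one_iff_adj.2 ((star_adj hn).2 ⟨hv, Or.inr rfl⟩))

/-- the delta function at the center, as used below -/
def dc (n : ℕ) [NeZero n] : Fin n → ℝ := fun j => if j = 0 then 1 else 0

lemma dc_ne_zero [NeZero n] : dc n ≠ 0 := by
  intro h
  have := congrFun h 0
  simp [dc] at this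

lemma pNorm_dc [NeZero n] {p : ℝ} (hp : 0 < p) : pNorm p (dc n) = 1 := by
  unfold pNorm dc
  have : ∀ j : Fin n, |if j = 0 then (1:ℝ) else 0| ^ p = if j = 0 then 1 else 0 := by
    intro j
    split
    · simp
    · simp [Real.zero_rpow hp.ne']
  rw [Finset.sum_congr rfl fun j _ => this j]
  simp

lemma maxOp_dc_center (hn : 1 ≤ n) [NeZero n] : (1:ℝ) ≤ maxOp (starGraph n) (dc n) 0 := by
  have h := term_le_maxOp (starGraph n) (dc n) 0 0 (by simp; omega)
  rw [star_ball_center hn] at h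
  simpa [dc] using h

lemma maxOp_dc_leaf (hn : 1 ≤ n) [NeZero n] {v : Fin n} (hv : v ≠ 0) :
    (1:ℝ)/2 ≤ maxOp (starGraph n) (dc n) v := by
  have h2n : 2 ≤ n := by
    by_contra h
    interval_cases n
    · exact hv (Subsingleton.elim _ _)
  have h := term_le_maxOp (starGraph n) (dc n) v 1 (by simp; omega)
  rw [star_ball_leaf hn hv] at h
  rw [Finset.sum_pair hv, Finset.card_pair hv] at h
  simpa [dc, hv] using h

lemma maxOp_dc_ge_half (hn : 1 ≤ n) [NeZero n] (v : Fin n) :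
    (1:ℝ)/2 ≤ maxOp (starGraph n) (dc n) v := by
  rcases eq_or_ne v 0 with rfl | hv
  · linarith [maxOp_dc_center (n := n) hn]
  · exact maxOp_dc_leaf hn hv

end star

section main
variable {n : ℕ}

lemma wOpNorm_bddAbove (G : SimpleGraph V) (p : ℝ) (hp : 0 < p) :
    BddAbove (Set.range fun f : {f : V → ℝ // f ≠ 0} =>
      wNorm p (maxOp G f.1) / pNorm p f.1) :=
  ⟨(Fintype.card V : ℝ) ^ (1/p), by
    rintro x ⟨f, rfl⟩
    rw [div_le_iff₀ (pNorm_pos p hp f.2)]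
    exact wNorm_maxOp_le G p hp f.1⟩

lemma wNorm_dc_ge_half (hn : 1 ≤ n) [NeZero n] (p : ℝ) (hp : 0 < p) :
    (n : ℝ) ^ (1/p) / 2 ≤ wNorm p (maxOp (starGraph n) (dc n)) := by
  have hn0 : (0:ℝ) < (n : ℝ) := by exact_mod_cast hn
  have hA : (0:ℝ) < (n : ℝ) ^ (1/p) := Real.rpow_pos_of_pos hn0 _
  have key := ciSup_pos_ge
    (fun t : {t : ℝ // 0 < t} =>
      t.1 * ((Finset.univ.filter fun v => t.1 < |maxOp (starGraph n) (dc n) v|).card : ℝ) ^ (1/p))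
    (wNorm_maxOp_bdd (starGraph n) p hp (dc n)) (1/2) ((n:ℝ)^(1/p)) (by norm_num) hA ?_
  · rw [wNorm]
    calc (n : ℝ) ^ (1/p) / 2 = 1/2 * (n:ℝ)^(1/p) := by ring
      _ ≤ _ := key
  · rintro ⟨t, ht⟩ htc
    dsimp only at htc ⊢
    have hfil : (Finset.univ.filter fun v => t < |maxOp (starGraph n) (dc n) v|) =
        (Finset.univ : Finset (Fin n)) := by
      refine Finset.filter_true_of_mem fun v _ => ?_
      calc t < 1/2 := htc
        _ ≤ maxOp (starGraph n) (dc n) v := maxOp_dc_ge_half hn v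
        _ ≤ |maxOp (starGraph n) (dc n) v| := le_abs_self _
    rw [hfil, Finset.card_univ, Fintype.card_fin]

lemma wNorm_dc_ge_one (hn : 1 ≤ n) [NeZero n] (p : ℝ) (hp : 0 < p) :
    (1 : ℝ) ≤ wNorm p (maxOp (starGraph n) (dc n)) := by
  have key := ciSup_pos_ge
    (fun t : {t : ℝ // 0 < t} =>
      t.1 * ((Finset.univ.filter fun v => t.1 < |maxOp (starGraph n) (dc n) v|).card : ℝ) ^ (1/p))
    (wNorm_maxOp_bdd (starGraph n) p hp (dc n)) 1 1 one_pos one_pos ?_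
  · rw [wNorm]; simpa using key
  · rintro ⟨t, ht⟩ htc
    dsimp only at htc ⊢
    have h0 : (0 : Fin n) ∈ Finset.univ.filter fun v => t < |maxOp (starGraph n) (dc n) v| := by
      refine Finset.mem_filter.2 ⟨Finset.mem_univ _, ?_⟩
      calc t < 1 := htc
        _ ≤ maxOp (starGraph n) (dc n) 0 := maxOp_dc_center hn
        _ ≤ |maxOp (starGraph n) (dc n) 0| := le_abs_self _
    have hcard : (1:ℝ) ≤ ((Finset.univ.filter fun v =>
        t < |maxOp (starGraph n) (dc n) v|).card : ℝ) := by
      exact_mod_cast Finset.card_pos.2 ⟨0, h0⟩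
    calc t * 1 = t := mul_one t
      _ = t * 1 := (mul_one t).symm
      _ ≤ t * ((Finset.univ.filter fun v =>
            t < |maxOp (starGraph n) (dc n) v|).card : ℝ) ^ (1/p) :=
          mul_le_mul_of_nonneg_left (Real.one_le_rpow hcard (by positivity)) ht.le

end main

/-- weak-type norm of the maximal operator of the star graph, and
the resulting upper bound for arbitrary connected graphs. -/
theorem stmt16 (n : ℕ) (hn : 1 ≤ n) (p : ℝ) (hp : 0 < p) :
    max ((n : ℝ) ^ (1 / p) / 2) 1 ≤ wOpNorm (starGraph n) p ∧
    wOpNorm (starGraph n) p ≤ (n : ℝ) ^ (1 / p) ∧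
    (∀ G : SimpleGraph (Fin n), G.Connected →
      wOpNorm G p ≤ 2 * wOpNorm (starGraph n) p) := by
  haveI : NeZero n := ⟨by omega⟩
  have hkey : wNorm p (maxOp (starGraph n) (dc n)) ≤ wOpNorm (starGraph n) p := by
    have h := le_ciSup (f := fun f : {f : Fin n → ℝ // f ≠ 0} =>
        wNorm p (maxOp (starGraph n) f.1) / pNorm p f.1)
      (wOpNorm_bddAbove (starGraph n) p hp) ⟨dc n, dc_ne_zero⟩
    rw [wOpNorm]
    dsimp only at h
    rwa [pNorm_dc hp, div_one] at h
  have lb1 : (n : ℝ) ^ (1/p) / 2 ≤ wOpNorm (starGraph n) p :=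
    le_trans (wNorm_dc_ge_half hn p hp) hkey
  have lb2 : (1:ℝ) ≤ wOpNorm (starGraph n) p :=
    le_trans (wNorm_dc_ge_one hn p hp) hkey
  refine ⟨max_le lb1 lb2, ?_, ?_⟩
  · have h := wOpNorm_le (starGraph n) p hp
    rwa [Fintype.card_fin] at h
  · intro G _
    have h1 := wOpNorm_le G p hp
    rw [Fintype.card_fin] at h1
    linarith

end
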